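/- Let $N\ge 2$, $p>0$, $q\in[0,2)$ with $p+q>1$, and set $\beta_1=(2-q)/(p+q-1)$ and $\Lambda_1=((\beta_1+2)/\beta_1^{q-1})^{1/(p+q-1)}$. Then for any $\delta\ge 0$, the function $w(x)=\Lambda_1(|x|-\delta)^{-\beta_1}$ satisfies $-\Delta w + w^p|\nabla w|^q \ge 0$ on $\{x\in\mathbb{R}^N : |x|>\delta\}$. -/

import Mathlib

/-- The (flat) Laplacian of a function on `ℝ^N`, as a sum of second partial derivatives. -/
noncomputable def lap {N : ℕ} (f : EuclideanSpace ℝ (Fin N) → ℝ)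
    (x : EuclideanSpace ℝ (Fin N)) : ℝ :=
  ∑ i : Fin N, fderiv ℝ (fun y => fderiv ℝ f y (EuclideanSpace.single i 1)) x
    (EuclideanSpace.single i 1)

open RealInnerProductSpace

lemma sq_hasFDerivAt {N : ℕ} (y : EuclideanSpace ℝ (Fin N)) :
    HasFDerivAt (fun z : EuclideanSpace ℝ (Fin N) => (⟪z, z⟫ : ℝ))
      ((2:ℝ) • innerSL ℝ y) y := by
  have h := (hasFDerivAt_id y).inner ℝ (hasFDerivAt_id y)
  refine h.congr_fderiv ?_
  ext v
  simp only [ContinuousLinearMap.smul_apply, innerSL_apply_apply, smul_eq_mul,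
    ContinuousLinearMap.comp_apply, ContinuousLinearMap.prod_apply,
    ContinuousLinearMap.id_apply, fderivInnerCLM_apply, id]
  rw [real_inner_comm v y]
  ring

noncomputable def Kaux (Λ β δ s : ℝ) : ℝ :=
  -(Λ*β) * (Real.sqrt s - δ)^(-β-1) * (Real.sqrt s)⁻¹

noncomputable def K'aux (Λ β δ s : ℝ) : ℝ :=
  -(Λ*β) * (1/(2*Real.sqrt s) * (-β-1) * (Real.sqrt s - δ)^(-β-2)) * (Real.sqrt s)⁻¹
  + -(Λ*β) * (Real.sqrt s - δ)^(-β-1) * (-(1/(2*Real.sqrt s)) / Real.sqrt s ^ 2)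

lemma sqrt_inner_self {N : ℕ} (z : EuclideanSpace ℝ (Fin N)) :
    Real.sqrt (⟪z, z⟫) = ‖z‖ := by
  rw [real_inner_self_eq_norm_mul_norm, Real.sqrt_mul_self (norm_nonneg z)]

lemma grad_aux {N : ℕ} (Λ β δ : ℝ) (hδ : 0 ≤ δ) (y : EuclideanSpace ℝ (Fin N))
    (hy : δ < ‖y‖) :
    HasFDerivAt (fun z : EuclideanSpace ℝ (Fin N) => Λ * (‖z‖ - δ) ^ (-β))
      (Kaux Λ β δ (⟪y, y⟫ : ℝ) • innerSL ℝ y) y := by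
  have hy0 : 0 < ‖y‖ := lt_of_le_of_lt hδ hy
  have hsq : Real.sqrt (⟪y, y⟫ : ℝ) = ‖y‖ := sqrt_inner_self y
  have hs0 : (0:ℝ) < (⟪y, y⟫ : ℝ) := by
    rw [real_inner_self_eq_norm_mul_norm]; positivity
  have htpos : 0 < Real.sqrt (⟪y, y⟫ : ℝ) - δ := by rw [hsq]; linarith
  have hsd : HasDerivAt (fun s : ℝ => Real.sqrt s - δ)
      (1/(2*Real.sqrt (⟪y, y⟫ : ℝ))) (⟪y, y⟫ : ℝ) :=
    (Real.hasDerivAt_sqrt hs0.ne').sub_const δ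
  have h1 : HasDerivAt (fun s : ℝ => Λ * (Real.sqrt s - δ)^(-β))
      (Λ * (1/(2*Real.sqrt (⟪y, y⟫ : ℝ)) * (-β) * (Real.sqrt (⟪y, y⟫ : ℝ) - δ)^(-β-1)))
      (⟪y, y⟫ : ℝ) :=
    (hsd.rpow_const (Or.inl htpos.ne')).const_mul Λ
  have hcomp := h1.comp_hasFDerivAt (f := fun z : EuclideanSpace ℝ (Fin N) => (⟪z, z⟫ : ℝ)) y (sq_hasFDerivAt y)
  have hfun : (fun z : EuclideanSpace ℝ (Fin N) => Λ * (‖z‖ - δ) ^ (-β))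
      = (fun s : ℝ => Λ * (Real.sqrt s - δ)^(-β)) ∘ (fun z => (⟪z, z⟫ : ℝ)) := by
    funext z
    simp only [Function.comp_apply, sqrt_inner_self z]
  rw [← hfun] at hcomp
  refine hcomp.congr_fderiv ?_
  have hsne : Real.sqrt (⟪y, y⟫ : ℝ) ≠ 0 := by rw [hsq]; positivity
  ext v
  simp only [ContinuousLinearMap.smul_apply, innerSL_apply_apply, smul_eq_mul, Kaux]
  field_simp

lemma Kaux_hasDerivAt (Λ β δ : ℝ) {s : ℝ} (hs0 : 0 < s)
    (ht : 0 < Real.sqrt s - δ) :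
    HasDerivAt (fun u => Kaux Λ β δ u) (K'aux Λ β δ s) s := by
  have hsne : Real.sqrt s ≠ 0 := by positivity
  have hsd : HasDerivAt (fun u : ℝ => Real.sqrt u - δ) (1/(2*Real.sqrt s)) s :=
    (Real.hasDerivAt_sqrt hs0.ne').sub_const δ
  have h1 : HasDerivAt (fun u : ℝ => -(Λ*β) * (Real.sqrt u - δ)^(-β-1))
      (-(Λ*β) * (1/(2*Real.sqrt s) * (-β-1) * (Real.sqrt s - δ)^(-β-2))) s := by
    have := (hsd.rpow_const (p := -β-1) (Or.inl ht.ne')).const_mul (-(Λ*β))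
    rw [show -β-1-1 = -β-2 from by ring] at this
    exact this
  have h2 : HasDerivAt (fun u : ℝ => (Real.sqrt u)⁻¹)
      (-(1/(2*Real.sqrt s)) / Real.sqrt s ^ 2) s :=
    (Real.hasDerivAt_sqrt hs0.ne').inv hsne
  have := h1.mul h2
  simpa [Kaux, K'aux, Pi.mul_def] using this

theorem stmt1 (N : ℕ) (hN : 2 ≤ N) (p q : ℝ) (hp : 0 < p) (hq0 : 0 ≤ q) (hq2 : q < 2)
    (hpq : 1 < p + q) (β Λ : ℝ)
    (hβ : β = (2 - q) / (p + q - 1))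
    (hΛ : Λ = ((β + 2) / β ^ (q - 1)) ^ (1 / (p + q - 1)))
    (δ : ℝ) (hδ : 0 ≤ δ) :
    ∀ x : EuclideanSpace ℝ (Fin N), δ < ‖x‖ →
      0 ≤ -lap (fun y => Λ * (‖y‖ - δ) ^ (-β)) x
            + (Λ * (‖x‖ - δ) ^ (-β)) ^ p
              * ‖fderiv ℝ (fun y => Λ * (‖y‖ - δ) ^ (-β)) x‖ ^ q := by
  have hpq0 : (0:ℝ) < p + q - 1 := by linarith
  have hβpos : 0 < β := by rw [hβ]; exact div_pos (by linarith) hpq0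
  have hbase : 0 < (β + 2) / β ^ (q - 1) :=
    div_pos (by linarith) (Real.rpow_pos_of_pos hβpos _)
  have hΛpos : 0 < Λ := by rw [hΛ]; exact Real.rpow_pos_of_pos hbase _
  intro x hx
  have hr : 0 < ‖x‖ := lt_of_le_of_lt hδ hx
  have ht : 0 < ‖x‖ - δ := sub_pos.2 hx
  set r : ℝ := ‖x‖ with hrdef
  set t : ℝ := r - δ with htdef
  set A : ℝ := t ^ (-β-1) with hAdef
  set B : ℝ := t ^ (-β-2) with hBdef
  have hApos : 0 < A := Real.rpow_pos_of_pos ht _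
  have hBpos : 0 < B := Real.rpow_pos_of_pos ht _
  have hs0 : (0:ℝ) < (⟪x, x⟫ : ℝ) := by
    rw [real_inner_self_eq_norm_mul_norm]; positivity
  have hsqx : Real.sqrt (⟪x, x⟫ : ℝ) = r := sqrt_inner_self x
  have hsub : 0 < Real.sqrt (⟪x, x⟫ : ℝ) - δ := by rw [hsqx]; exact ht
  have hKval : Kaux Λ β δ (⟪x, x⟫ : ℝ) = -(Λ*β) * A * r⁻¹ := by
    rw [Kaux, hsqx]
  have hK'val : K'aux Λ β δ (⟪x, x⟫ : ℝ)
      = -(Λ*β) * (1/(2*r) * (-β-1) * B) * r⁻¹ + -(Λ*β) * A * (-(1/(2*r)) / r^2) := by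
    rw [K'aux, hsqx]
  -- norm of the gradient
  have hgradx := grad_aux Λ β δ hδ x hx
  have hnorm : ‖fderiv ℝ (fun y : EuclideanSpace ℝ (Fin N) => Λ * (‖y‖ - δ) ^ (-β)) x‖
      = Λ * β * A := by
    rw [hgradx.fderiv, norm_smul, innerSL_apply_norm, Real.norm_eq_abs, hKval,
      show -(Λ*β) * A * r⁻¹ = -(Λ*β*A*r⁻¹) from by ring, abs_neg,
      abs_of_nonneg (by positivity)]
    field_simp
    exact hrdef.symm
  -- each second partial derivative
  have hKd := Kaux_hasDerivAt Λ β δ hs0 hsub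
  have hU : {z : EuclideanSpace ℝ (Fin N) | δ < ‖z‖} ∈ nhds x :=
    (isOpen_lt continuous_const continuous_norm).mem_nhds hx
  have hterm : ∀ i : Fin N,
      fderiv ℝ (fun y => fderiv ℝ (fun z : EuclideanSpace ℝ (Fin N) => Λ * (‖z‖ - δ) ^ (-β)) y
        (EuclideanSpace.single i 1)) x (EuclideanSpace.single i 1)
        = Kaux Λ β δ (⟪x, x⟫ : ℝ) + 2 * K'aux Λ β δ (⟪x, x⟫ : ℝ) * (x i * x i) := by
    intro i
    have heq : (fun y => fderiv ℝ (fun z : EuclideanSpace ℝ (Fin N) => Λ * (‖z‖ - δ) ^ (-β)) y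
        (EuclideanSpace.single i 1))
        =ᶠ[nhds x] fun z => Kaux Λ β δ (⟪z, z⟫ : ℝ)
          * (⟪(EuclideanSpace.single i (1:ℝ) : EuclideanSpace ℝ (Fin N)), z⟫ : ℝ) := by
      filter_upwards [hU] with z hz
      rw [(grad_aux Λ β δ hδ z hz).fderiv]
      simp only [ContinuousLinearMap.smul_apply, innerSL_apply_apply, smul_eq_mul]
      rw [real_inner_comm z (EuclideanSpace.single i 1)]
    rw [heq.fderiv_eq]
    have hKc := hKd.comp_hasFDerivAt (f := fun z : EuclideanSpace ℝ (Fin N) => (⟪z, z⟫ : ℝ)) x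
      (sq_hasFDerivAt x)
    have hlin : HasFDerivAt (fun z : EuclideanSpace ℝ (Fin N) =>
        (⟪(EuclideanSpace.single i (1:ℝ) : EuclideanSpace ℝ (Fin N)), z⟫ : ℝ))
        (innerSL ℝ (EuclideanSpace.single i (1:ℝ))) x :=
      (innerSL ℝ (EuclideanSpace.single i (1:ℝ))).hasFDerivAt
    have hmul := hKc.mul hlin
    have hfd : fderiv ℝ (fun z => Kaux Λ β δ (⟪z, z⟫ : ℝ)
          * (⟪(EuclideanSpace.single i (1:ℝ) : EuclideanSpace ℝ (Fin N)), z⟫ : ℝ)) x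
        = ((fun z : EuclideanSpace ℝ (Fin N) => Kaux Λ β δ (⟪z, z⟫ : ℝ)) x)
            • innerSL ℝ (EuclideanSpace.single i (1:ℝ))
          + ((⟪(EuclideanSpace.single i (1:ℝ) : EuclideanSpace ℝ (Fin N)), x⟫ : ℝ))
            • (K'aux Λ β δ (⟪x, x⟫ : ℝ) • (2:ℝ) • innerSL ℝ x) := hmul.fderiv
    rw [hfd]
    simp only [ContinuousLinearMap.add_apply, ContinuousLinearMap.smul_apply,
      innerSL_apply_apply, smul_eq_mul, EuclideanSpace.inner_single_left, map_one, one_mul,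
      EuclideanSpace.single_apply]
    rw [real_inner_comm x]
    simp [EuclideanSpace.inner_single_left, EuclideanSpace.inner_single_right]
    ring
  -- the Laplacian value
  have hxx : ∑ i, x i * x i = (⟪x, x⟫ : ℝ) := by
    simp only [PiLp.inner_apply, RCLike.inner_apply, starRingEnd_apply, star_trivial]
  have hlap : lap (fun z : EuclideanSpace ℝ (Fin N) => Λ * (‖z‖ - δ) ^ (-β)) x
      = (N:ℝ) * Kaux Λ β δ (⟪x, x⟫ : ℝ) + 2 * K'aux Λ β δ (⟪x, x⟫ : ℝ) * (r * r) := by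
    unfold lap
    rw [Finset.sum_congr rfl fun i _ => hterm i, Finset.sum_add_distrib,
      Finset.sum_const, ← Finset.mul_sum, hxx, Finset.card_univ, Fintype.card_fin,
      nsmul_eq_mul, real_inner_self_eq_norm_mul_norm]
  -- the nonlinear term
  have hβe : β * (p + q - 1) = 2 - q := by rw [hβ]; field_simp
  have hΛe : Λ ^ (p + q - 1) = (β + 2) / β ^ (q - 1) := by
    rw [hΛ, ← Real.rpow_mul hbase.le, one_div, inv_mul_cancel₀ hpq0.ne', Real.rpow_one]
  have hnl : (Λ * t ^ (-β)) ^ p * (Λ * β * A) ^ q = Λ * β * (β + 2) * B := by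
    have htβ : (0:ℝ) < t ^ (-β) := Real.rpow_pos_of_pos ht _
    have e1 : (Λ * t ^ (-β)) ^ p = Λ ^ p * t ^ (-β * p) := by
      rw [Real.mul_rpow hΛpos.le htβ.le, ← Real.rpow_mul ht.le]
    have e2 : (Λ * β * A) ^ q = Λ ^ q * β ^ q * t ^ ((-β-1) * q) := by
      rw [hAdef, Real.mul_rpow (by positivity) (Real.rpow_pos_of_pos ht _).le,
        Real.mul_rpow hΛpos.le hβpos.le, ← Real.rpow_mul ht.le]
    rw [e1, e2]
    have e3 : Λ ^ p * t ^ (-β * p) * (Λ ^ q * β ^ q * t ^ ((-β-1) * q))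
        = (Λ ^ p * Λ ^ q) * β ^ q * (t ^ (-β * p) * t ^ ((-β-1) * q)) := by ring
    rw [e3, ← Real.rpow_add hΛpos, ← Real.rpow_add ht]
    have e4 : -β * p + (-β-1) * q = -β - 2 := by linear_combination -hβe
    have e5 : Λ ^ (p + q) = Λ * ((β + 2) / β ^ (q - 1)) := by
      rw [show p + q = 1 + (p + q - 1) from by ring, Real.rpow_add hΛpos,
        Real.rpow_one, hΛe]
    have e6 : β ^ q = β * β ^ (q - 1) := by
      rw [show q = 1 + (q - 1) from by ring, Real.rpow_add hβpos, Real.rpow_one]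
      ring_nf
    rw [e4, e5, e6, hBdef]
    have hβq : (0:ℝ) < β ^ (q - 1) := Real.rpow_pos_of_pos hβpos _
    field_simp
  -- put everything together
  rw [hnorm, hlap, hKval, hK'val, hnl]
  have hN1 : (1:ℝ) ≤ (N:ℝ) := by exact_mod_cast Nat.one_le_of_lt hN
  have key : -((N:ℝ) * (-(Λ*β) * A * r⁻¹)
        + 2 * (-(Λ*β) * (1/(2*r) * (-β-1) * B) * r⁻¹ + -(Λ*β) * A * (-(1/(2*r)) / r^2)) * (r * r))
      + Λ * β * (β + 2) * B
      = Λ * β * B + ((N:ℝ) - 1) * (Λ * β * A) / r := by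
    field_simp
    ring
  rw [key]
  have h1 : 0 < Λ * β * B := by positivity
  have h2 : 0 ≤ ((N:ℝ) - 1) * (Λ * β * A) / r :=
    div_nonneg (mul_nonneg (by linarith) (by positivity)) hr.le
  linarith
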